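/- For every natural number N ≥ 1, the following identity of rational functions in q holds: (1/(1-q)) (1 − (q^2;q^2)_N/(q^3;q^2)_N) = ∑_{n=1}^{N} [N choose n]_{q^2} (-1)^{n-1} q^{n(n+1)}/(1-q^{2n+1}). -/

import Mathlib

open Finset

/-- q-Pochhammer symbol (a;q)_n = ∏_{k=0}^{n-1} (1 - a q^k). -/
noncomputable def qP (a q : ℂ) (n : ℕ) : ℂ := ∏ k ∈ Finset.range n, (1 - a * q ^ k)

/-- Gaussian (q-)binomial coefficient [N choose n]_q. -/
noncomputable def qBinom (q : ℂ) (N n : ℕ) : ℂ := qP q q N / (qP q q n * qP q q (N - n))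

lemma pow_ne_one_of_norm_lt_one {q : ℂ} (hq : ‖q‖ < 1) {m : ℕ} (hm : 1 ≤ m) : q ^ m ≠ 1 := by
  intro h
  have h1 : ‖q ^ m‖ < 1 := by
    rw [norm_pow]
    calc ‖q‖ ^ m ≤ ‖q‖ ^ 1 := pow_le_pow_of_le_one (norm_nonneg q) hq.le hm
    _ = ‖q‖ := pow_one _
    _ < 1 := hq
  rw [h] at h1; simp at h1

lemma qP_zero (a q : ℂ) : qP a q 0 = 1 := by simp [qP]

lemma qP_succ (a q : ℂ) (n : ℕ) : qP a q (n+1) = qP a q n * (1 - a * q ^ n) :=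
  Finset.prod_range_succ _ n

lemma qP_succ' (a q : ℂ) (n : ℕ) : qP a q (n+1) = (1 - a) * qP (a*q) q n := by
  rw [qP, Finset.prod_range_succ']
  simp only [pow_zero, mul_one]
  rw [mul_comm, qP]
  congr 1
  apply Finset.prod_congr rfl
  intro k _
  ring

lemma qP_ne_zero {a q : ℂ} {n : ℕ} (h : ∀ k < n, a * q ^ k ≠ 1) : qP a q n ≠ 0 := by
  rw [qP]
  apply Finset.prod_ne_zero_iff.mpr
  intro k hk hc
  exact h k (Finset.mem_range.mp hk) (by linear_combination -hc)

lemma qP_t_ne_zero {t : ℂ} (ht : ∀ k, 1 ≤ k → t ^ k ≠ 1) (n : ℕ) : qP t t n ≠ 0 :=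
  qP_ne_zero (fun k _ => by rw [← pow_succ']; exact ht (k+1) k.succ_pos)

lemma qBinom_zero {t : ℂ} (ht : ∀ k, 1 ≤ k → t ^ k ≠ 1) (N : ℕ) : qBinom t N 0 = 1 := by
  rw [qBinom, qP_zero, one_mul, Nat.sub_zero, div_self (qP_t_ne_zero ht N)]

lemma qBinom_self {t : ℂ} (ht : ∀ k, 1 ≤ k → t ^ k ≠ 1) (N : ℕ) : qBinom t N N = 1 := by
  rw [qBinom, Nat.sub_self, qP_zero, mul_one, div_self (qP_t_ne_zero ht N)]

lemma qBinom_pascal {t : ℂ} (ht : ∀ k, 1 ≤ k → t ^ k ≠ 1) (i j : ℕ) :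
    qBinom t (i+j+2) (i+1) = qBinom t (i+j+1) (i+1) + t^(j+1) * qBinom t (i+j+1) i := by
  have e1 : i + j + 2 - (i+1) = j+1 := by omega
  have e2 : i + j + 1 - (i+1) = j := by omega
  have e3 : i + j + 1 - i = j+1 := by omega
  rw [qBinom, qBinom, qBinom, e1, e2, e3]
  rw [show i+j+2 = (i+j+1)+1 from rfl, qP_succ t t (i+j+1), qP_succ t t j, qP_succ t t i]
  have hA := qP_t_ne_zero ht (i+j+1)
  have hB := qP_t_ne_zero ht i
  have hC := qP_t_ne_zero ht j
  have f1 : (1 : ℂ) - t * t ^ i ≠ 0 := fun hc => ht (i+1) i.succ_pos (by rw [pow_succ']; linear_combination -hc)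
  have f2 : (1 : ℂ) - t * t ^ j ≠ 0 := fun hc => ht (j+1) j.succ_pos (by rw [pow_succ']; linear_combination -hc)
  field_simp
  ring

lemma keyL {q : ℂ} (hq : ‖q‖ < 1) :
    ∀ N : ℕ, ∀ z : ℂ, (∀ k, k ≤ N → z * (q^2)^k ≠ 1) →
    ∑ k ∈ Finset.range (N+1), qBinom (q^2) N k * ((-1)^k * q^(k*(k+1)) / (1 - z * (q^2)^k))
      = qP (q^2) (q^2) N / qP z (q^2) (N+1) := by
  have ht : ∀ k, 1 ≤ k → (q^2) ^ k ≠ 1 := by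
    intro k hk h
    exact pow_ne_one_of_norm_lt_one hq (m := 2*k) (by omega) (by rw [pow_mul]; exact h)
  intro N
  induction N with
  | zero =>
    intro z hz
    simp [qBinom, qP, Finset.sum_range_succ]
  | succ N ih =>
    intro z hz
    have hzk : ∀ k, k ≤ N → z * (q^2)^k ≠ 1 := fun k hk => hz k (by omega)
    have hzt : ∀ k, k ≤ N → (z * q^2) * (q^2)^k ≠ 1 := by
      intro k hk h
      exact hz (k+1) (by omega) (by rw [pow_succ']; linear_combination h)
    -- split off k = N+1
    rw [Finset.sum_range_succ]
    -- split off k = 0 from remaining sum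
    rw [Finset.sum_range_succ']
    -- Pascal on inner sum
    have hpas : ∀ k ∈ Finset.range N,
        qBinom (q^2) (N+1) (k+1) * ((-1)^(k+1) * q^((k+1)*(k+1+1)) / (1 - z * (q^2)^(k+1)))
        = qBinom (q^2) N (k+1) * ((-1)^(k+1) * q^((k+1)*(k+1+1)) / (1 - z * (q^2)^(k+1)))
          + (q^2)^(N-k) * qBinom (q^2) N k * ((-1)^(k+1) * q^((k+1)*(k+1+1)) / (1 - z * (q^2)^(k+1))) := by
      intro k hk
      have hkN : k < N := Finset.mem_range.mp hk
      have := qBinom_pascal ht k (N-1-k)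
      have e1 : k + (N-1-k) + 2 = N + 1 := by omega
      have e2 : k + (N-1-k) + 1 = N := by omega
      have e3 : N - 1 - k + 1 = N - k := by omega
      rw [e1, e2, e3] at this
      rw [this]; ring
    rw [Finset.sum_congr rfl hpas, Finset.sum_add_distrib]
    -- reassemble first part into IH sum
    have merge1 : (∑ k ∈ Finset.range N, qBinom (q^2) N (k+1) * ((-1)^(k+1) * q^((k+1)*(k+1+1)) / (1 - z * (q^2)^(k+1))))
        + qBinom (q^2) (N+1) 0 * ((-1)^0 * q^(0*(0+1)) / (1 - z * (q^2)^0))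
        = qP (q^2) (q^2) N / qP z (q^2) (N+1) := by
      rw [qBinom_zero ht]
      rw [← ih z hzk, Finset.sum_range_succ']
      rw [qBinom_zero ht]
    -- second part plus the top term
    have merge2 : (∑ k ∈ Finset.range N, (q^2)^(N-k) * qBinom (q^2) N k * ((-1)^(k+1) * q^((k+1)*(k+1+1)) / (1 - z * (q^2)^(k+1))))
        + qBinom (q^2) (N+1) (N+1) * ((-1)^(N+1) * q^((N+1)*(N+1+1)) / (1 - z * (q^2)^(N+1)))
        = - (q^2)^(N+1) * (qP (q^2) (q^2) N / qP (z * q^2) (q^2) (N+1)) := by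
      have htop : qBinom (q^2) (N+1) (N+1) * ((-1)^(N+1) * q^((N+1)*(N+1+1)) / (1 - z * (q^2)^(N+1)))
          = (q^2)^(N-N) * qBinom (q^2) N N * ((-1)^(N+1) * q^((N+1)*(N+1+1)) / (1 - z * (q^2)^(N+1))) := by
        rw [qBinom_self ht, qBinom_self ht, Nat.sub_self]; ring
      rw [htop, ← Finset.sum_range_succ]
      rw [← ih (z * q^2) hzt, Finset.mul_sum]
      apply Finset.sum_congr rfl
      intro k hk
      have hkN : k ≤ N := by have := Finset.mem_range.mp hk; omega
      have ee : (k+1)*(k+1+1) = k*(k+1) + 2*(k+1) := by ring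
      have e5 : (q^2)^(N-k) * (q^2)^(k+1) = ((q^2):ℂ)^(N+1) := by
        rw [← pow_add]; congr 1; omega
      have epow : (q^2)^(N-k) * q^((k+1)*(k+1+1)) = (q^2)^(N+1) * q^(k*(k+1)) := by
        rw [ee, pow_add, show q^(2*(k+1)) = ((q^2):ℂ)^(k+1) from pow_mul q 2 (k+1)]
        linear_combination q^(k*(k+1)) * e5
      have eden : 1 - z * (q^2)^(k+1) = 1 - (z * q^2) * (q^2)^k := by rw [pow_succ']; ring
      rw [eden]
      have key : (q^2)^(N-k) * ((-1:ℂ)^(k+1) * q^((k+1)*(k+1+1)))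
          = -(q^2)^(N+1) * ((-1:ℂ)^k * q^(k*(k+1))) := by
        linear_combination (-(-1:ℂ)^k) * epow
      linear_combination (qBinom (q^2) N k / (1 - z * q^2 * (q^2)^k)) * key
    have hP : qP z (q^2) (N+1) ≠ 0 := qP_ne_zero (fun k hk => hz k (by omega))
    have hQ : qP (z*(q^2)) (q^2) (N+1) ≠ 0 := qP_ne_zero (fun k hk => hzt k (by omega))
    have h4 : (1:ℂ) - z*(q^2)^(N+1) ≠ 0 := fun hc => hz (N+1) le_rfl (by linear_combination -hc)
    have rel : (1-z) * qP (z*(q^2)) (q^2) (N+1) = qP z (q^2) (N+1) * (1 - z*(q^2)^(N+1)) := by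
      rw [← qP_succ', qP_succ]
    have hz0 : (1:ℂ) - z ≠ 0 := fun hc => hz 0 (by omega) (by simpa using (by linear_combination -hc : z = 1))
    have expand : qP (z*(q^2)) (q^2) (N+1) = qP z (q^2) (N+1) * (1 - z*(q^2)^(N+1)) / (1-z) := by
      field_simp
      linear_combination rel
    have final : qP (q^2) (q^2) N / qP z (q^2) (N+1)
        + (- (q^2)^(N+1) * (qP (q^2) (q^2) N / qP (z * q^2) (q^2) (N+1)))
        = qP (q^2) (q^2) (N+1) / qP z (q^2) (N+1+1) := by
      rw [qP_succ z (q^2) (N+1), qP_succ (q^2) (q^2) N, expand]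
      have hrw : ((q:ℂ)^2) * (q^2)^N = (q^2)^(N+1) := by rw [← pow_succ']
      field_simp [hrw]
      have hX : (1:ℂ) - q ^ 2 * q ^ (N * 2) * z ≠ 0 := by
        intro hc; apply h4; linear_combination hc
      linear_combination (-qP (q^2) (q^2) N) * (mul_inv_cancel₀ hX)
    linear_combination merge1 + merge2 + final

theorem stmt_19 (N : ℕ) (hN : 1 ≤ N) (q : ℂ) (hq : ‖q‖ < 1) :
    (1 / (1 - q)) * (1 - qP (q ^ 2) (q ^ 2) N / qP (q ^ 3) (q ^ 2) N) =
      ∑ n ∈ Finset.Icc 1 N,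
        qBinom (q ^ 2) N n * ((-1) ^ (n - 1) * q ^ (n * (n + 1)) / (1 - q ^ (2 * n + 1))) := by
  have ht : ∀ k, 1 ≤ k → ((q:ℂ)^2) ^ k ≠ 1 := by
    intro k hk h
    exact pow_ne_one_of_norm_lt_one hq (m := 2*k) (by omega) (by rw [pow_mul]; exact h)
  have hz : ∀ k, k ≤ N → q * (q^2)^k ≠ 1 := by
    intro k _ h
    exact pow_ne_one_of_norm_lt_one hq (m := 2*k+1) (by omega)
      (by rw [pow_add, pow_mul, pow_one]; linear_combination h)
  have hkey := keyL hq N q hz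
  rw [Finset.sum_range_succ'] at hkey
  have hf0 : qBinom (q^2) N 0 * ((-1:ℂ)^0 * q^(0*(0+1)) / (1 - q * (q^2)^0)) = 1/(1-q) := by
    rw [qBinom_zero ht]
    norm_num
  rw [hf0] at hkey
  -- RHS as a range sum
  have hIcc : ∑ n ∈ Finset.Icc 1 N,
        qBinom (q ^ 2) N n * ((-1) ^ (n - 1) * q ^ (n * (n + 1)) / (1 - q ^ (2 * n + 1)))
      = ∑ k ∈ Finset.range N,
        qBinom (q ^ 2) N (k+1) * ((-1) ^ k * q ^ ((k+1) * (k+1+1)) / (1 - q ^ (2 * (k+1) + 1))) := by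
    rw [← Finset.Ico_add_one_right_eq_Icc, Finset.sum_Ico_eq_sum_range]
    simp only [Nat.add_sub_cancel, Nat.succ_sub_one]
    apply Finset.sum_congr rfl
    intro k _
    have e : 1 + k = k + 1 := by omega
    rw [e]
    norm_num
  have hterm : ∀ k ∈ Finset.range N,
      qBinom (q ^ 2) N (k+1) * ((-1) ^ k * q ^ ((k+1) * (k+1+1)) / (1 - q ^ (2 * (k+1) + 1)))
      = - (qBinom (q^2) N (k+1) * ((-1)^(k+1) * q^((k+1)*(k+1+1)) / (1 - q * (q^2)^(k+1)))) := by
    intro k _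
    have hd : (q:ℂ) ^ (2*(k+1)+1) = q * (q^2)^(k+1) := by
      rw [pow_add, pow_mul, pow_one]; ring
    rw [hd, pow_succ (-1:ℂ)]
    ring
  rw [hIcc, Finset.sum_congr rfl hterm, Finset.sum_neg_distrib]
  -- now: LHS = -(keyLsum - 1/(1-q))
  have hq1 : (1:ℂ) - q ≠ 0 := by
    intro hc
    exact pow_ne_one_of_norm_lt_one hq (m := 1) le_rfl (by rw [pow_one]; linear_combination -hc)
  have hB : qP ((q:ℂ)^3) (q^2) N ≠ 0 := by
    apply qP_ne_zero
    intro k _ h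
    exact pow_ne_one_of_norm_lt_one hq (m := 2*k+3) (by omega)
      (by rw [pow_add, pow_mul]; linear_combination h)
  have hden : qP q ((q:ℂ)^2) (N+1) = (1 - q) * qP (q^3) (q^2) N := by
    rw [qP_succ']
    congr 2
    ring
  rw [hden] at hkey
  have halg : (1 / (1 - q)) * (1 - qP (q ^ 2) (q ^ 2) N / qP (q ^ 3) (q ^ 2) N)
      = 1/(1-q) - qP (q ^ 2) (q ^ 2) N / ((1 - q) * qP (q ^ 3) (q ^ 2) N) := by
    field_simp
  linear_combination halg + hkey
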